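/- Let S = K[x_1,x_2], 𝔪 = (x_1,x_2). Then for all i ≥ 0, k ≥ 1, and 0 ≤ j, the higher iterated Hilbert coefficients of the powers of the maximal ideal satisfy e^i_j(𝔪^k) = (k+1)C(k,j) - kC(k+1,j); in particular e^i_j(𝔪^k) is a polynomial in k of degree j. -/

import Mathlib

open MvPolynomial Finset

section CombAux

/-- Vandermonde-type alternating sum. -/
private lemma auxVlem (c : ℕ) : ∀ (a m : ℕ),
    (∑ j ∈ Finset.range (m+1), (-1:ℚ)^j * (a.choose j) * ((c + (m-j)).choose (m-j)))
      = if c < a then (-1:ℚ)^m * ((a-c-1).choose m) else ((c-a+m).choose m) := by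
  intro a
  induction a with
  | zero =>
    intro m
    rw [Finset.sum_eq_single 0]
    · simp
    · intro j hj hj0
      have : 0 < j := Nat.pos_of_ne_zero hj0
      simp [Nat.choose_eq_zero_of_lt this]
    · simp
  | succ a IH =>
    intro m
    match m with
    | 0 => simp
    | (m+1) =>
      have hrec : (∑ j ∈ range (m+2), (-1:ℚ)^j * ((a+1).choose j) * ((c + (m+1-j)).choose (m+1-j)))
          = (∑ j ∈ range (m+2), (-1:ℚ)^j * (a.choose j) * ((c + (m+1-j)).choose (m+1-j)))
            - ∑ j ∈ range (m+1), (-1:ℚ)^j * (a.choose j) * ((c + (m-j)).choose (m-j)) := by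
        rw [Finset.sum_range_succ' (fun j => (-1:ℚ)^j * ((a+1).choose j) * ((c + (m+1-j)).choose (m+1-j))) (m+1),
          Finset.sum_range_succ' (fun j => (-1:ℚ)^j * (a.choose j) * ((c + (m+1-j)).choose (m+1-j))) (m+1)]
        rw [eq_sub_iff_add_eq]
        have : ∀ j ∈ range (m+1),
            (-1:ℚ)^(j+1) * ((a+1).choose (j+1)) * ((c + (m+1-(j+1))).choose (m+1-(j+1)))
            = ((-1:ℚ)^(j+1) * (a.choose (j+1)) * ((c + (m+1-(j+1))).choose (m+1-(j+1))))
              + (-((-1:ℚ)^j * (a.choose j) * ((c + (m-j)).choose (m-j)))) := by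
          intro j hj
          have h1 : m + 1 - (j+1) = m - j := by omega
          rw [h1, Nat.choose_succ_succ a j]
          push_cast
          ring
        rw [Finset.sum_congr rfl this, Finset.sum_add_distrib, Finset.sum_neg_distrib]
        simp only [Nat.choose_zero_right, pow_zero, Nat.cast_one]
        ring
      rw [hrec, IH (m+1), IH m]
      rcases lt_trichotomy c a with h | h | h
      · obtain ⟨e, rfl⟩ : ∃ e, a = c + e + 1 := ⟨a - c - 1, by omega⟩
        rw [if_pos h, if_pos h, if_pos (show c < c + e + 1 + 1 by omega)]
        rw [show c + e + 1 + 1 - c - 1 = e + 1 by omega, show c + e + 1 - c - 1 = e by omega,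
          Nat.choose_succ_succ]
        push_cast
        ring
      · subst h
        rw [if_neg (lt_irrefl c), if_neg (lt_irrefl c), if_pos (show c < c + 1 by omega)]
        rw [show c + 1 - c - 1 = 0 by omega, show c - c + (m + 1) = m + 1 by omega,
          show c - c + m = m by omega, Nat.choose_zero_succ, Nat.choose_self, Nat.choose_self]
        simp
      · obtain ⟨e, rfl⟩ : ∃ e, c = a + e + 1 := ⟨c - a - 1, by omega⟩
        rw [if_neg (show ¬ a + e + 1 < a by omega), if_neg (show ¬ a + e + 1 < a by omega),
          if_neg (show ¬ a + e + 1 < a + 1 by omega)]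
        rw [show a + e + 1 - a + (m + 1) = (e + m + 1) + 1 by omega,
          show a + e + 1 - a + m = e + m + 1 by omega,
          show a + e + 1 - (a + 1) + (m + 1) = e + m + 1 by omega,
          Nat.choose_succ_succ]
        push_cast
        ring

/-- `e_j(k) = (k+1)C(k,j) - kC(k+1,j) = (1-j)C(k+1,j)`. -/
private lemma aux_e_eq (k j : ℕ) : ((k:ℚ)+1) * (k.choose j) - (k:ℚ) * ((k+1).choose j)
    = (1 - (j:ℚ)) * ((k+1).choose j) := by
  rcases le_or_gt j (k+1) with h | h
  · have hn : (k+1) * k.choose j = (k+1).choose j * (k+1-j) := by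
      rw [Nat.add_one_mul_choose_eq, Nat.choose_succ_right_eq]
    have hq : ((k:ℚ)+1) * (k.choose j) = ((k+1).choose j : ℚ) * ((k:ℚ)+1-j) := by
      have := congrArg (fun n : ℕ => (n : ℚ)) hn
      push_cast [h] at this
      convert this using 2
    rw [hq]; ring
  · rw [Nat.choose_eq_zero_of_lt (by omega), Nat.choose_eq_zero_of_lt h]
    simp

private lemma aux_jmul (k j : ℕ) :
    ((j:ℚ)+1) * ((k+1).choose (j+1)) = ((k:ℚ)+1) * (k.choose j) := by
  have := congrArg (fun n : ℕ => (n : ℚ)) (Nat.add_one_mul_choose_eq k j)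
  push_cast at this
  linarith

/-- The key cancellation identity. -/
private lemma auxKeyIdentity (k m : ℕ) (hk : 1 ≤ k) (hm : 2 ≤ m) :
    ∑ j ∈ Finset.range (m+1), (-1:ℚ)^j * (((k:ℚ)+1) * (k.choose j) - (k:ℚ) * ((k+1).choose j))
      * (((k-1) + (m-j)).choose (m-j)) = 0 := by
  have split : ∀ j ∈ range (m+1),
      (-1:ℚ)^j * (((k:ℚ)+1) * (k.choose j) - (k:ℚ) * ((k+1).choose j))
        * (((k-1) + (m-j)).choose (m-j))
      = (-1:ℚ)^j * ((k+1).choose j) * (((k-1) + (m-j)).choose (m-j))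
        - (j:ℚ) * ((-1:ℚ)^j * ((k+1).choose j) * (((k-1) + (m-j)).choose (m-j))) := by
    intro j _
    rw [aux_e_eq]
    ring
  rw [Finset.sum_congr rfl split, Finset.sum_sub_distrib]
  have hF : ∑ j ∈ range (m+1), (-1:ℚ)^j * ((k+1).choose j) * (((k-1) + (m-j)).choose (m-j))
      = 0 := by
    rw [auxVlem (k-1) (k+1) m, if_pos (by omega), show k + 1 - (k-1) - 1 = 1 by omega,
      Nat.choose_eq_zero_of_lt (by omega)]
    simp
  have hG : ∑ j ∈ range (m+1), (j:ℚ) * ((-1:ℚ)^j * ((k+1).choose j) * (((k-1) + (m-j)).choose (m-j)))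
      = 0 := by
    obtain ⟨m', rfl⟩ : ∃ m', m = m' + 1 := ⟨m - 1, by omega⟩
    rw [Finset.sum_range_succ' _ (m'+1)]
    have congr1 : ∀ j ∈ range (m'+1),
        ((j:ℚ)+1) * ((-1:ℚ)^(j+1) * ((k+1).choose (j+1)) * (((k-1) + (m'-j)).choose (m'-j)))
        = -(((k:ℚ)+1) * ((-1:ℚ)^j * (k.choose j) * (((k-1) + (m'-j)).choose (m'-j)))) := by
      intro j _
      calc ((j:ℚ)+1) * ((-1:ℚ)^(j+1) * ((k+1).choose (j+1)) * (((k-1) + (m'-j)).choose (m'-j)))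
          = (((j:ℚ)+1) * ((k+1).choose (j+1))) * ((-1:ℚ)^(j+1) * (((k-1) + (m'-j)).choose (m'-j))) := by ring
        _ = (((k:ℚ)+1) * (k.choose j)) * ((-1:ℚ)^(j+1) * (((k-1) + (m'-j)).choose (m'-j))) := by rw [aux_jmul]
        _ = -(((k:ℚ)+1) * ((-1:ℚ)^j * (k.choose j) * (((k-1) + (m'-j)).choose (m'-j)))) := by ring
    push_cast
    rw [Finset.sum_congr rfl congr1]
    simp only [Nat.cast_zero, zero_mul, add_zero]
    rw [Finset.sum_neg_distrib, ← Finset.mul_sum, auxVlem (k-1) k m', if_pos (by omega),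
      show k - (k-1) - 1 = 0 by omega, Nat.choose_eq_zero_of_lt (by omega)]
    simp
  rw [hF, hG]
  ring

/-- Hockey-stick summation for `Ring.choose` over `ℚ`. -/
private lemma auxHockey (r : ℚ) (m : ℕ) (k : ℤ) : ∀ x : ℤ, k ≤ x →
    ∑ t ∈ Finset.Icc k x, Ring.choose ((t:ℚ) + r) m
      = Ring.choose ((x:ℚ) + r + 1) (m+1) - Ring.choose ((k:ℚ) + r) (m+1) := by
  refine Int.le_induction ?_ ?_
  · rw [Finset.Icc_self, Finset.sum_singleton, Ring.choose_succ_succ ((k:ℚ) + r) m]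
    ring
  · intro x hx IH
    rw [show Finset.Icc k (x+1) = insert (x+1) (Finset.Icc k x) by
        ext t; simp only [Finset.mem_Icc, Finset.mem_insert]; omega,
      Finset.sum_insert (by simp), IH]
    have hp := Ring.choose_succ_succ ((x:ℚ) + r + 1) m
    push_cast
    rw [show ((x:ℚ)) + 1 + r = (x:ℚ) + r + 1 by ring]
    linarith

end CombAux

/-- The iterated Hilbert functions: `H_0 = H` and `H_i(k) = Σ_{j ≤ k} H_{i-1}(j)`, where the
function `H` is supported on degrees `≥ i0`, so that the sum may be taken over `Icc i0 k`. -/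
noncomputable def iterHilbert (H : ℤ → ℚ) (i0 : ℤ) : ℕ → ℤ → ℚ
  | 0 => H
  | (i + 1) => fun k => ∑ j ∈ Finset.Icc i0 k, iterHilbert H i0 i j

/-- The Hilbert function of `𝔪^k ⊆ S = K[x_1,x_2]`, `𝔪 = (x_1,x_2)`. -/
noncomputable def maxPowerHilbert (K : Type) [Field K] (k : ℕ) : ℤ → ℚ := fun x =>
  if x < 0 then 0 else
    (Module.finrank K
      (↥(Submodule.restrictScalars K
          ((Ideal.span (Set.range (X : Fin 2 → MvPolynomial (Fin 2) K))) ^ k) ⊓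
        homogeneousSubmodule (Fin 2) K x.toNat)) : ℚ)

noncomputable section AlgAux

variable (K : Type) [Field K]

private def mIdl : Ideal (MvPolynomial (Fin 2) K) :=
  Ideal.span (Set.range (X : Fin 2 → MvPolynomial (Fin 2) K))

private def Mk (n : ℕ) : Ideal (MvPolynomial (Fin 2) K) :=
  Ideal.span ((fun d => monomial d (1:K)) '' {d : Fin 2 →₀ ℕ | n ≤ Finsupp.degree d})

private lemma deg2 (d : Fin 2 →₀ ℕ) : Finsupp.degree d = d 0 + d 1 := by
  rw [Finsupp.degree_apply, show (∑ i ∈ d.support, d i) = ∑ i : Fin 2, d i from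
    Finset.sum_subset (Finset.subset_univ _) (fun i _ hi => Finsupp.notMem_support_iff.mp hi),
    Fin.sum_univ_two]

private lemma deg_mono {d m : Fin 2 →₀ ℕ} (h : d ≤ m) : Finsupp.degree d ≤ Finsupp.degree m := by
  rw [deg2, deg2]
  have h0 := (Finsupp.le_def.mp h) 0
  have h1 := (Finsupp.le_def.mp h) 1
  omega

private lemma monomial_mem_pow (d : Fin 2 →₀ ℕ) :
    monomial d (1:K) ∈ (mIdl K) ^ (Finsupp.degree d) := by
  have key : ∀ s : Finset (Fin 2), (∏ i ∈ s, (X i : MvPolynomial (Fin 2) K) ^ d i)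
      ∈ (mIdl K) ^ (∑ i ∈ s, d i) := by
    intro s
    induction s using Finset.induction with
    | empty => simp
    | @insert a s ha IH =>
      rw [Finset.prod_insert ha, Finset.sum_insert ha, pow_add]
      exact Ideal.mul_mem_mul (Ideal.pow_mem_pow
        (show (X a : MvPolynomial (Fin 2) K) ∈ mIdl K from Ideal.subset_span ⟨a, rfl⟩) _) IH
  have h2 : monomial d (1:K) = ∏ i ∈ d.support, (X i : MvPolynomial (Fin 2) K) ^ d i := by
    rw [monomial_eq, C_1, one_mul]
    rfl
  rw [h2]
  exact key d.support

private lemma pow_le_Mk (n : ℕ) : (mIdl K) ^ n ≤ Mk K n := by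
  induction n with
  | zero =>
    rw [pow_zero, Ideal.one_eq_top]
    intro p _
    have h1 : (1 : MvPolynomial (Fin 2) K) ∈ Mk K 0 :=
      Ideal.subset_span ⟨0, by simp, by simp⟩
    simpa using Ideal.mul_mem_left _ p h1
  | succ n IH =>
    rw [pow_succ]
    calc (mIdl K) ^ n * mIdl K ≤ Mk K n * mIdl K := Ideal.mul_mono_left IH
      _ ≤ Mk K (n+1) := by
        rw [Mk, mIdl, Ideal.span_mul_span', Ideal.span_le]
        rintro z hz
        obtain ⟨s, hs, t, ht, rfl⟩ := Set.mem_mul.mp hz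
        obtain ⟨d, hd, rfl⟩ := hs
        obtain ⟨i, rfl⟩ := ht
        have hmul : monomial d (1:K) * X i = monomial (d + Finsupp.single i 1) (1:K) := by
          rw [X, monomial_mul, one_mul]
        rw [hmul]
        refine Ideal.subset_span ⟨d + Finsupp.single i 1, ?_, rfl⟩
        have hdeg : Finsupp.degree (d + Finsupp.single i 1) = Finsupp.degree d + 1 := by
          rw [deg2, deg2]
          fin_cases i <;> simp [Finsupp.add_apply, Finsupp.single_apply] <;> omega
        simp only [Set.mem_setOf_eq, hdeg]
        exact Nat.add_le_add_right hd 1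

private lemma inf_eq_bot {k t : ℕ} (h : t < k) :
    Submodule.restrictScalars K ((mIdl K) ^ k) ⊓ homogeneousSubmodule (Fin 2) K t = ⊥ := by
  rw [eq_bot_iff]
  intro p hp
  rw [Submodule.mem_inf] at hp
  obtain ⟨hp1, hp2⟩ := hp
  have hp1' : p ∈ Mk K k := pow_le_Mk K k hp1
  rw [Mk] at hp1'
  have hp2' : p.IsHomogeneous t := (mem_homogeneousSubmodule _ _).mp hp2
  have hsupp : p.support = ∅ := by
    refine Finset.eq_empty_of_forall_notMem fun m hm => ?_
    obtain ⟨d, hd, hdm⟩ := MvPolynomial.mem_ideal_span_monomial_image.mp hp1' m hm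
    have h1 : Finsupp.degree d ≤ Finsupp.degree m := deg_mono hdm
    have h2 : Finsupp.degree m = t := by
      have := hp2' (MvPolynomial.mem_support_iff.mp hm)
      rw [Finsupp.degree_eq_weight_one]; exact this
    simp only [Set.mem_setOf_eq] at hd
    omega
  simpa using MvPolynomial.support_eq_empty.mp hsupp

private lemma homsub_le {k t : ℕ} (h : k ≤ t) :
    homogeneousSubmodule (Fin 2) K t ≤ Submodule.restrictScalars K ((mIdl K) ^ k) := by
  intro p hp
  have hp' : p.IsHomogeneous t := (mem_homogeneousSubmodule _ _).mp hp
  show p ∈ (mIdl K) ^ k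
  rw [← MvPolynomial.support_sum_monomial_coeff p]
  refine Ideal.sum_mem _ fun m hm => ?_
  have hdeg : Finsupp.degree m = t := by
    have := hp' (MvPolynomial.mem_support_iff.mp hm)
    rw [Finsupp.degree_eq_weight_one]; exact this
  have h1 : monomial m (coeff m p) = C (coeff m p) * monomial m (1:K) := by
    rw [C_mul_monomial, mul_one]
  rw [h1]
  exact Ideal.mul_mem_left _ _
    (Ideal.pow_le_pow_right (by omega) (monomial_mem_pow K m))

private def phiT (t : ℕ) : Fin (t+1) → (Fin 2 →₀ ℕ) :=
  fun a => Finsupp.single 0 (a : ℕ) + Finsupp.single 1 (t - (a:ℕ))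

private lemma phiT0 (t : ℕ) (a : Fin (t+1)) : (phiT t a) 0 = (a : ℕ) := by
  simp [phiT, Finsupp.single_apply]

private lemma phiT1 (t : ℕ) (a : Fin (t+1)) : (phiT t a) 1 = t - (a : ℕ) := by
  simp [phiT, Finsupp.single_apply]

private lemma phiT_deg (t : ℕ) (a : Fin (t+1)) : Finsupp.degree (phiT t a) = t := by
  rw [deg2, phiT0, phiT1]
  have := a.isLt
  omega

private lemma phiT_inj (t : ℕ) : Function.Injective (phiT t) := by
  intro a b hab
  have h : (a : ℕ) = (b : ℕ) := by rw [← phiT0 t a, ← phiT0 t b, hab]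
  exact Fin.ext h

private lemma span_homsub (t : ℕ) :
    homogeneousSubmodule (Fin 2) K t
      = Submodule.span K (Set.range (fun a : Fin (t+1) => monomial (phiT t a) (1:K))) := by
  apply le_antisymm
  · intro p hp
    have hp' : p.IsHomogeneous t := (mem_homogeneousSubmodule _ _).mp hp
    rw [← MvPolynomial.support_sum_monomial_coeff p]
    refine Submodule.sum_mem _ fun m hm => ?_
    have hdeg : Finsupp.degree m = t := by
      have := hp' (MvPolynomial.mem_support_iff.mp hm)
      rw [Finsupp.degree_eq_weight_one]; exact this
    have hm0 : m 0 ≤ t := hdeg ▸ Finsupp.le_degree 0 m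
    set a : Fin (t+1) := ⟨m 0, by omega⟩ with ha
    have hma : m = phiT t a := by
      ext i
      have hsum : m 0 + m 1 = t := by rw [← deg2, hdeg]
      fin_cases i
      · show m 0 = (phiT t a) 0
        rw [phiT0]
      · show m 1 = (phiT t a) 1
        rw [phiT1]
        show m 1 = t - m 0
        omega
    have : monomial m (coeff m p) = (coeff m p) • monomial (phiT t a) (1:K) := by
      rw [smul_monomial, smul_eq_mul, mul_one, hma]
    rw [this]
    exact Submodule.smul_mem _ _ (Submodule.subset_span ⟨a, rfl⟩)
  · rw [Submodule.span_le]
    rintro q ⟨a, rfl⟩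
    exact (mem_homogeneousSubmodule _ _).mpr (isHomogeneous_monomial _ (phiT_deg t a))

private lemma finrank_homsub (t : ℕ) :
    Module.finrank K (homogeneousSubmodule (Fin 2) K t) = t + 1 := by
  have hLI : LinearIndependent K (fun a : Fin (t+1) => monomial (phiT t a) (1:K)) := by
    have h := (MvPolynomial.basisMonomials (Fin 2) K).linearIndependent.comp
      (phiT t) (phiT_inj t)
    simp only [MvPolynomial.coe_basisMonomials] at h; exact h
  rw [span_homsub, finrank_span_eq_card hLI, Fintype.card_fin]

end AlgAux

section IterAux

private lemma aux_iter_vanish (H : ℤ → ℚ) (k : ℤ)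
    (h : ∀ x : ℤ, x < k → H x = 0) :
    ∀ i, ∀ x : ℤ, x < k → iterHilbert H 0 i x = 0 := by
  intro i
  induction i with
  | zero => exact h
  | succ i IH =>
    intro x hx
    show ∑ t ∈ Finset.Icc 0 x, iterHilbert H 0 i t = 0
    exact Finset.sum_eq_zero fun t ht => IH t (by simp only [Finset.mem_Icc] at ht; omega)

/-- Main combinatorial induction: the iterated Hilbert function of a function `H` that is
`x+1` for `x ≥ k` and `0` below `k`. -/
private lemma aux_core (k : ℕ) (hk : 1 ≤ k) (H : ℤ → ℚ)
    (h0 : ∀ x : ℤ, (k:ℤ) ≤ x → H x = (x:ℚ) + 1)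
    (hlow : ∀ x : ℤ, x < (k:ℤ) → H x = 0) :
    ∀ (i : ℕ) (x : ℤ), (k:ℤ) ≤ x →
      iterHilbert H 0 i x =
        ∑ j ∈ Finset.range (i + 2), (-1 : ℚ) ^ j *
          (((k : ℚ) + 1) * Ring.choose (k : ℚ) j - (k : ℚ) * Ring.choose ((k : ℚ) + 1) j) *
          Ring.choose ((x : ℚ) + (i : ℚ) + 1 - (j : ℚ)) (i + 1 - j) := by
  have Ecast : ∀ j : ℕ,
      ((k : ℚ) + 1) * Ring.choose (k : ℚ) j - (k : ℚ) * Ring.choose ((k : ℚ) + 1) j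
        = ((k:ℚ)+1) * (k.choose j) - (k:ℚ) * ((k+1).choose j) := by
    intro j
    rw [show ((k:ℚ)+1) = ((k+1 : ℕ) : ℚ) by push_cast; ring, Ring.choose_natCast,
      Ring.choose_natCast]
  intro i
  induction i with
  | zero =>
    intro x hx
    show H x = _
    rw [h0 x hx]
    rw [Finset.sum_range_succ, Finset.sum_range_succ, Finset.sum_range_zero]
    norm_num [Ring.choose_zero_right, Ring.choose_one_right, Ecast]
    ring
  | succ i IH =>
    intro x hx
    show ∑ t ∈ Finset.Icc 0 x, iterHilbert H 0 i t = _
    rw [← Finset.sum_subset (Finset.Icc_subset_Icc (by omega) le_rfl :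
        Finset.Icc (k:ℤ) x ⊆ Finset.Icc 0 x)
      (fun t ht hnt => aux_iter_vanish H k hlow i t (by
        simp only [Finset.mem_Icc] at ht hnt; omega))]
    rw [Finset.sum_congr rfl (fun t ht => IH t (by simp only [Finset.mem_Icc] at ht; exact ht.1))]
    rw [Finset.sum_comm]
    -- evaluate inner sums with the hockey stick
    have inner : ∀ j ∈ Finset.range (i+2),
        ∑ t ∈ Finset.Icc (k:ℤ) x, (-1 : ℚ) ^ j *
          (((k : ℚ) + 1) * Ring.choose (k : ℚ) j - (k : ℚ) * Ring.choose ((k : ℚ) + 1) j) *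
          Ring.choose ((t : ℚ) + (i : ℚ) + 1 - (j : ℚ)) (i + 1 - j)
        = (-1 : ℚ) ^ j *
            (((k : ℚ) + 1) * Ring.choose (k : ℚ) j - (k : ℚ) * Ring.choose ((k : ℚ) + 1) j) *
          (Ring.choose ((x : ℚ) + ((i:ℚ) + 1 - (j:ℚ)) + 1) ((i + 1 - j) + 1)
            - Ring.choose ((k : ℚ) + ((i:ℚ) + 1 - (j:ℚ))) ((i + 1 - j) + 1)) := by
      intro j _
      have hh := auxHockey ((i:ℚ) + 1 - (j:ℚ)) (i + 1 - j) (k:ℤ) x hx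
      push_cast at hh
      rw [← Finset.mul_sum, ← hh]
      congr 1
      refine Finset.sum_congr rfl fun t _ => ?_
      congr 1
      ring
    rw [Finset.sum_congr rfl inner]
    -- now compare with the target sum
    rw [Finset.sum_range_succ (fun j => (-1 : ℚ) ^ j *
          (((k : ℚ) + 1) * Ring.choose (k : ℚ) j - (k : ℚ) * Ring.choose ((k : ℚ) + 1) j) *
          Ring.choose ((x : ℚ) + ((i:ℕ)+1 : ℕ) + 1 - (j : ℚ)) ((i+1) + 1 - j)) (i+2)]
    have hmatch : ∀ j ∈ Finset.range (i+2),
        (-1 : ℚ) ^ j *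
            (((k : ℚ) + 1) * Ring.choose (k : ℚ) j - (k : ℚ) * Ring.choose ((k : ℚ) + 1) j) *
          (Ring.choose ((x : ℚ) + ((i:ℚ) + 1 - (j:ℚ)) + 1) ((i + 1 - j) + 1)
            - Ring.choose ((k : ℚ) + ((i:ℚ) + 1 - (j:ℚ))) ((i + 1 - j) + 1))
        = ((-1 : ℚ) ^ j *
            (((k : ℚ) + 1) * Ring.choose (k : ℚ) j - (k : ℚ) * Ring.choose ((k : ℚ) + 1) j) *
          Ring.choose ((x : ℚ) + ((i:ℕ)+1 : ℕ) + 1 - (j : ℚ)) ((i+1) + 1 - j))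
          - ((-1 : ℚ) ^ j *
            (((k:ℚ)+1) * (k.choose j) - (k:ℚ) * ((k+1).choose j)) *
            (((k-1) + ((i+2)-j)).choose ((i+2)-j) : ℕ)) := by
      intro j hj
      simp only [Finset.mem_range] at hj
      have hj' : j ≤ i + 1 := by omega
      have e1 : (i + 1 - j) + 1 = (i+1) + 1 - j := by omega
      have e2 : (x : ℚ) + ((i:ℚ) + 1 - (j:ℚ)) + 1 = (x : ℚ) + (((i:ℕ)+1 : ℕ) : ℚ) + 1 - (j:ℚ) := by
        push_cast; ring
      have e3 : ((k : ℚ) + ((i:ℚ) + 1 - (j:ℚ))) = (((k-1) + ((i+2)-j) : ℕ) : ℚ) := by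
        have h1 : ((k - 1 : ℕ) : ℚ) = (k:ℚ) - 1 := by
          push_cast [hk]; ring
        push_cast [h1, show j ≤ i + 2 by omega]
        ring
      have c1 : Ring.choose ((x : ℚ) + ((i:ℚ) + 1 - (j:ℚ)) + 1) ((i + 1 - j) + 1)
          = Ring.choose ((x : ℚ) + (((i:ℕ)+1 : ℕ) : ℚ) + 1 - (j:ℚ)) ((i+1) + 1 - j) := by
        rw [e1, e2]
      have c2 : Ring.choose ((k : ℚ) + ((i:ℚ) + 1 - (j:ℚ))) ((i + 1 - j) + 1)
          = ((((k-1) + ((i+2)-j)).choose ((i+2)-j) : ℕ) : ℚ) := by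
        rw [show (i + 1 - j) + 1 = (i+2) - j by omega, e3, Ring.choose_natCast]
      rw [c1, c2, Ecast]
      ring
    rw [Finset.sum_congr rfl hmatch, Finset.sum_sub_distrib]
    have hkey : ∑ j ∈ Finset.range (i+2), ((-1 : ℚ) ^ j *
            (((k:ℚ)+1) * (k.choose j) - (k:ℚ) * ((k+1).choose j)) *
            (((k-1) + ((i+2)-j)).choose ((i+2)-j) : ℕ))
        = - ((-1 : ℚ) ^ (i+2) *
            (((k : ℚ) + 1) * Ring.choose (k : ℚ) (i+2) - (k : ℚ) * Ring.choose ((k : ℚ) + 1) (i+2)) *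
          Ring.choose ((x : ℚ) + (((i:ℕ)+1 : ℕ) : ℚ) + 1 - ((i+2 : ℕ) : ℚ)) ((i+1) + 1 - (i+2))) := by
      have hKI := auxKeyIdentity k (i+2) hk (by omega)
      rw [Finset.sum_range_succ] at hKI
      have hlast : (((k-1) + ((i+2)-(i+2))).choose ((i+2)-(i+2)) : ℕ) = 1 := by
        simp
      rw [show (i+2) - (i+2) = 0 by omega] at hKI
      simp only [Nat.choose_zero_right, Nat.cast_one, mul_one] at hKI
      rw [show (i+1) + 1 - (i+2) = 0 by omega, Ring.choose_zero_right, mul_one, Ecast]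
      linarith [hKI]
    rw [hkey]
    ring

end IterAux

section EvalAux

variable (K : Type) [Field K]

private lemma maxPowerHilbert_eval_ge (k : ℕ) (hk : 1 ≤ k) (x : ℤ) (hx : (k:ℤ) ≤ x) :
    maxPowerHilbert K k x = (x:ℚ) + 1 := by
  rw [maxPowerHilbert, if_neg (by omega : ¬ x < 0)]
  have hkt : k ≤ x.toNat := by omega
  have hinf : Submodule.restrictScalars K
        ((Ideal.span (Set.range (X : Fin 2 → MvPolynomial (Fin 2) K))) ^ k) ⊓
      homogeneousSubmodule (Fin 2) K x.toNat = homogeneousSubmodule (Fin 2) K x.toNat :=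
    inf_eq_right.mpr (homsub_le K hkt)
  rw [hinf, finrank_homsub]
  have hxt : ((x.toNat : ℕ) : ℚ) = (x:ℚ) := by
    exact_mod_cast congrArg (fun z : ℤ => (z:ℚ)) (Int.toNat_of_nonneg (by omega : (0:ℤ) ≤ x))
  push_cast [hxt]
  ring

private lemma maxPowerHilbert_eval_lt (k : ℕ) (hk : 1 ≤ k) (x : ℤ) (hx : x < (k:ℤ)) :
    maxPowerHilbert K k x = 0 := by
  rw [maxPowerHilbert]
  split_ifs with h
  · rfl
  · have hlt : x.toNat < k := by omega
    rw [show Ideal.span (Set.range (X : Fin 2 → MvPolynomial (Fin 2) K)) = mIdl K from rfl,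
      inf_eq_bot K hlt]
    simp

end EvalAux

/-- For `S = K[x_1,x_2]` and `𝔪 = (x_1,x_2)`, the higher iterated Hilbert
coefficients of `𝔪^k` (for `k ≥ 1`, `i ≥ 0`, `0 ≤ j`) are
`e^i_j(𝔪^k) = (k+1)C(k,j) - kC(k+1,j)`: the `i`-th iterated Hilbert function of `𝔪^k`
(a module of dimension `2`) eventually agrees with the binomial-basis expansion with these
coefficients; in particular `e^i_j(𝔪^k)` is a polynomial in `k` of degree (at most) `j`. -/
theorem hilbert_coefficients_of_powers_of_max_ideal (K : Type) [Field K] :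
    (∀ (i k : ℕ), 1 ≤ k → ∃ x0 : ℤ, ∀ x : ℤ, x ≥ x0 →
      iterHilbert (maxPowerHilbert K k) 0 i x =
        ∑ j ∈ range (i + 2), (-1 : ℚ) ^ j *
          (((k : ℚ) + 1) * Ring.choose (k : ℚ) j - (k : ℚ) * Ring.choose ((k : ℚ) + 1) j) *
          Ring.choose ((x : ℚ) + (i : ℚ) + 1 - (j : ℚ)) (i + 1 - j)) ∧
    ∀ j : ℕ, ∃ Q : Polynomial ℚ, Q.degree ≤ (j : ℕ) ∧ ∀ k : ℕ, 1 ≤ k →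
      ((k : ℚ) + 1) * Ring.choose (k : ℚ) j - (k : ℚ) * Ring.choose ((k : ℚ) + 1) j =
        Q.eval (k : ℚ) := by
  constructor
  · intro i k hk
    refine ⟨(k:ℤ), fun x hx => ?_⟩
    exact aux_core k hk (maxPowerHilbert K k)
      (fun y hy => maxPowerHilbert_eval_ge K k hk y hy)
      (fun y hy => maxPowerHilbert_eval_lt K k hk y hy) i x hx
  · intro j
    refine ⟨Polynomial.C ((1-(j:ℚ))/(j.factorial)) *
      ((descPochhammer ℚ j).comp (Polynomial.X + 1)), ?_, ?_⟩
    · have hnd : ((descPochhammer ℚ j).comp (Polynomial.X + 1)).natDegree ≤ j := by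
        rw [Polynomial.natDegree_comp, descPochhammer_natDegree,
          show (Polynomial.X + 1 : Polynomial ℚ) = Polynomial.X + Polynomial.C 1 by
            rw [Polynomial.C_1],
          Polynomial.natDegree_X_add_C, mul_one]
      calc (Polynomial.C ((1-(j:ℚ))/(j.factorial)) *
            ((descPochhammer ℚ j).comp (Polynomial.X + 1))).degree
          ≤ (Polynomial.C ((1-(j:ℚ))/(j.factorial))).degree
            + ((descPochhammer ℚ j).comp (Polynomial.X + 1)).degree :=
            Polynomial.degree_mul_le _ _
        _ ≤ 0 + (j : WithBot ℕ) := by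
            refine add_le_add Polynomial.degree_C_le ?_
            exact le_trans (Polynomial.degree_le_natDegree)
              (by exact_mod_cast Nat.cast_le.mpr hnd)
        _ = (j : WithBot ℕ) := by rw [zero_add]
    · intro k hk
      have hev : ((descPochhammer ℚ j).comp (Polynomial.X + 1)).eval (k:ℚ)
          = ((k+1).descFactorial j : ℚ) := by
        rw [Polynomial.eval_comp]
        simp only [Polynomial.eval_add, Polynomial.eval_X, Polynomial.eval_one]
        rw [show ((k:ℚ)+1) = (((k+1:ℕ)):ℚ) by push_cast; ring,
          descPochhammer_eval_eq_descFactorial]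
      rw [Polynomial.eval_mul, Polynomial.eval_C, hev]
      have h1 : ((k : ℚ) + 1) * Ring.choose (k : ℚ) j - (k : ℚ) * Ring.choose ((k : ℚ) + 1) j
          = (1 - (j:ℚ)) * ((k+1).choose j) := by
        rw [show ((k:ℚ)+1) = (((k+1:ℕ)):ℚ) by push_cast; ring, Ring.choose_natCast,
          Ring.choose_natCast]
        push_cast
        exact aux_e_eq k j
      rw [h1, Nat.descFactorial_eq_factorial_mul_choose]
      have hfac : ((j.factorial : ℚ)) ≠ 0 := by
        exact_mod_cast Nat.factorial_ne_zero j
      push_cast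
      field_simp
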